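/- For every integer L ≥ 1, the product P_L = ∏_{k=0}^{L−1} (3 − 2 cos(2πk/L)) equals r₊^L + r₋^L − 2, where r₊ = (3+√5)/2 and r₋ = (3−√5)/2. -/

import Mathlib

open Complex Polynomial Finset

theorem product_formula (L : ℕ) (hL : 1 ≤ L) :
    ∏ k ∈ Finset.range L, (3 - 2 * Real.cos (2 * Real.pi * k / L)) =
      ((3 + Real.sqrt 5) / 2) ^ L + ((3 - Real.sqrt 5) / 2) ^ L - 2 := by
  have hLpos : 0 < L := hL
  have hL0 : (L : ℂ) ≠ 0 := Nat.cast_ne_zero.mpr hLpos.ne'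
  set s5 := Real.sqrt 5 with hs5
  have hs5sq : s5 ^ 2 = 5 := Real.sq_sqrt (by norm_num)
  set r : ℝ := (3 + s5) / 2 with hr
  have hrpos : 0 < r := by
    have : 0 ≤ s5 := Real.sqrt_nonneg 5
    positivity
  have hrinv : (3 - s5) / 2 = r⁻¹ := by
    apply eq_inv_of_mul_eq_one_left
    field_simp [hr]
    nlinarith [hs5sq]
  -- primitive root
  set ζ : ℂ := Complex.exp (2 * Real.pi * Complex.I / L) with hζ
  have hprim : IsPrimitiveRoot ζ L := Complex.isPrimitiveRoot_exp L hLpos.ne'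
  -- complex product identity
  have hpoly := X_pow_sub_C_eq_prod (R := ℂ) hprim hLpos (one_pow L)
  have hprod : ∏ i ∈ Finset.range L, ((r : ℂ) - ζ ^ i) = (r : ℂ) ^ L - 1 := by
    have := congrArg (Polynomial.eval (r : ℂ)) hpoly
    simpa [Polynomial.eval_prod] using this.symm
  -- each factor
  have hfac : ∀ k ∈ Finset.range L,
      (3 - 2 * Real.cos (2 * Real.pi * k / L)) = Complex.normSq ((r:ℂ) - ζ ^ k) / r := by
    intro k _
    have hz : ζ ^ k = Complex.exp ((2 * Real.pi * k / L : ℝ) * Complex.I) := by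
      rw [hζ, ← Complex.exp_nat_mul]
      congr 1
      push_cast
      field_simp
    rw [hz, Complex.normSq_apply, Complex.sub_re, Complex.sub_im,
      Complex.exp_ofReal_mul_I_re, Complex.exp_ofReal_mul_I_im,
      Complex.ofReal_re, Complex.ofReal_im]
    have hc := Real.sin_sq_add_cos_sq (2 * Real.pi * k / L)
    field_simp
    nlinarith [hs5sq, hc]
  rw [Finset.prod_congr rfl hfac, Finset.prod_div_distrib, Finset.prod_const, Finset.card_range,
    ← map_prod Complex.normSq, hprod]
  have : Complex.normSq ((r:ℂ) ^ L - 1) = (r ^ L - 1) ^ 2 := by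
    rw [← Complex.ofReal_pow, ← Complex.ofReal_one, ← Complex.ofReal_sub, Complex.normSq_ofReal,
      sq]
  rw [this, hrinv]
  have hrL : (0:ℝ) < r ^ L := pow_pos hrpos L
  rw [inv_pow]
  field_simp
  ring
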